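/- Given a,b ∈ ℂ, the assignments L_i λ v_m = (∂+aλ+b)v_{i+m}, M_i λ v_m = 0, Y_i λ v_m = 0 on V = ⊕_{m∈ℤ} ℂ[∂]v_m define a ℤ-graded conformal module over the loop Schrödinger–Virasoro Lie conformal algebra csv. -/
import Mathlib

open Polynomial

/-- Generators of the loop Schrödinger–Virasoro Lie conformal algebra csv. -/
inductive Gen : Type
  | L : ℤ → Gen
  | M : ℤ → Gen
  | Y : ℤ → Gen
  deriving DecidableEq

/-- The λ-bracket of generators of csv (λ evaluated at `l`, ∂ = `X`). -/
noncomputable def br (l : ℂ) : Gen → Gen → (Gen →₀ Polynomial ℂ)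
  | Gen.L i, Gen.L j => Finsupp.single (Gen.L (i + j)) (X + C (2 * l))
  | Gen.L i, Gen.M j => Finsupp.single (Gen.M (i + j)) (X + C l)
  | Gen.M i, Gen.L j => Finsupp.single (Gen.M (i + j)) (C l)
  | Gen.L i, Gen.Y j => Finsupp.single (Gen.Y (i + j)) (X + C ((3/2) * l))
  | Gen.Y i, Gen.L j => Finsupp.single (Gen.Y (i + j)) (C (1/2) * X + C ((3/2) * l))
  | Gen.Y i, Gen.Y j => Finsupp.single (Gen.M (i + j)) (X + C (2 * l))
  | _, _ => 0

/-- The action of a generator on the basis vector v_m of V = ⊕_{m∈ℤ} ℂ[∂]v_m: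
L_i λ v_m = (∂+aλ+b)v_{i+m}, M_i λ v_m = 0, Y_i λ v_m = 0 (λ evaluated at `l`);
the result is recorded as a finitely supported family of ℂ[∂]-coefficients. -/
noncomputable def actB (a b : ℂ) (l : ℂ) : Gen → ℤ → (ℤ →₀ Polynomial ℂ)
  | Gen.L i, m => Finsupp.single (i + m) (X + C (a * l + b))
  | _, _ => 0

lemma actB_L (a b l : ℂ) (i m : ℤ) :
    actB a b l (Gen.L i) m = Finsupp.single (i + m) (X + C (a * l + b)) := rfl
lemma actB_M (a b l : ℂ) (i m : ℤ) : actB a b l (Gen.M i) m = 0 := rfl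
lemma actB_Y (a b l : ℂ) (i m : ℤ) : actB a b l (Gen.Y i) m = 0 := rfl

lemma sum_act_single (a b l : ℂ) (g : Gen) (n : ℤ) (p : Polynomial ℂ)
    (f : ℤ → Polynomial ℂ → Polynomial ℂ) (hf : ∀ n, f n 0 = 0) :
    ((Finsupp.single n p : ℤ →₀ Polynomial ℂ).sum fun n q => (f n q) • actB a b l g n)
      = (f n p) • actB a b l g n := by
  apply Finsupp.sum_single_index
  simp [hf]

/-- For any a,b ∈ ℂ, these assignments define a ℤ-graded conformal module over
csv: the action is graded (csv_i sends v_m into ℂ[∂,λ]·v_{i+m}) and the module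
compatibility g₁ λ (g₂ μ v_k) − g₂ μ (g₁ λ v_k) = [g₁ λ g₂]_{λ+μ} v_k holds for
all pairs of generators on every v_k. -/
theorem stmt_17 (a b : ℂ) :
    (∀ (i k : ℤ) (l : ℂ), (actB a b l (Gen.L i) k).support ⊆ {i + k})
    ∧ ∀ (g₁ g₂ : Gen) (k : ℤ) (l m : ℂ),
      ((actB a b m g₂ k).sum fun n q => (q.comp (X + C l)) • actB a b l g₁ n)
        - ((actB a b l g₁ k).sum fun n q => (q.comp (X + C m)) • actB a b m g₂ n)
        = (br l g₁ g₂).sum fun h p => (C (p.eval (-(l + m)))) • actB a b (l + m) h k := by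
  constructor
  · intro i k l
    rw [actB_L]
    exact Finsupp.support_single_subset
  · intro g₁ g₂ k l m
    have hbr : ∀ (hh : Gen) (q : Polynomial ℂ) (n : ℤ) (pl : ℂ),
        ((Finsupp.single hh q : Gen →₀ Polynomial ℂ).sum fun h p =>
          (C (p.eval (-(l + m)))) • actB a b pl h n)
          = (C (q.eval (-(l + m)))) • actB a b pl hh n := by
      intro hh q n pl
      apply Finsupp.sum_single_index
      simp
    cases g₁ with
    | L i =>
      cases g₂ with
      | L j =>
        rw [show br l (Gen.L i) (Gen.L j)
              = Finsupp.single (Gen.L (i + j)) (X + C (2 * l)) from rfl,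
          hbr, actB_L, actB_L,
          sum_act_single a b l (Gen.L i) _ _ _ (by simp),
          sum_act_single a b m (Gen.L j) _ _ _ (by simp),
          actB_L, actB_L, actB_L,
          show j + (i + k) = i + (j + k) by ring,
          show (i + j) + k = i + (j + k) by ring,
          Finsupp.smul_single, Finsupp.smul_single, Finsupp.smul_single,
          ← Finsupp.single_sub]
        congr 1
        simp only [smul_eq_mul, eval_add, eval_X, eval_C, add_comp, X_comp, C_comp]
        simp only [C_add, C_mul, C_neg, map_ofNat]
        ring
      | M j =>
        rw [show br l (Gen.L i) (Gen.M j)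
              = Finsupp.single (Gen.M (i + j)) (X + C l) from rfl, hbr]
        simp [actB_M, actB_L, Finsupp.sum_zero_index]
      | Y j =>
        rw [show br l (Gen.L i) (Gen.Y j)
              = Finsupp.single (Gen.Y (i + j)) (X + C ((3/2) * l)) from rfl, hbr]
        simp [actB_Y, actB_L, Finsupp.sum_zero_index]
    | M i =>
      cases g₂ with
      | L j =>
        rw [show br l (Gen.M i) (Gen.L j)
              = Finsupp.single (Gen.M (i + j)) (C l) from rfl, hbr]
        simp [actB_M, actB_L, Finsupp.sum_zero_index]
      | M j => simp [actB_M, show br l (Gen.M i) (Gen.M j) = 0 from rfl,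
          Finsupp.sum_zero_index]
      | Y j => simp [actB_M, actB_Y, show br l (Gen.M i) (Gen.Y j) = 0 from rfl,
          Finsupp.sum_zero_index]
    | Y i =>
      cases g₂ with
      | L j =>
        rw [show br l (Gen.Y i) (Gen.L j)
              = Finsupp.single (Gen.Y (i + j)) (C (1/2) * X + C ((3/2) * l)) from rfl, hbr]
        simp [actB_Y, actB_L, Finsupp.sum_zero_index]
      | M j => simp [actB_M, actB_Y, show br l (Gen.Y i) (Gen.M j) = 0 from rfl,
          Finsupp.sum_zero_index]
      | Y j =>
        rw [show br l (Gen.Y i) (Gen.Y j)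
              = Finsupp.single (Gen.M (i + j)) (X + C (2 * l)) from rfl, hbr]
        simp [actB_Y, actB_M, Finsupp.sum_zero_index]
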